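/- In the finite-dimensional discrete-spectrum clock setup, the time operator and the clock Hamiltonian form a canonically conjugate (Heisenberg) pair on the subspace D := {ψ ∈ ℋ_C : ⟨|t_max⟩, ψ⟩ = 0}: for every ψ ∈ ℋ_C with ⟨|t_max⟩, ψ⟩ = 0 one has (T̂ ∘ Ĥ_C − Ĥ_C ∘ T̂) ψ = i ψ, where |t_max⟩ = Σ_j e^{i g(j)} e^{−i ε_j t_max} e_j is the clock state at time t_max. -/

import Mathlib

open MeasureTheory

noncomputable section

/-- The rank-one operator `|v⟩⟨w| : ψ ↦ ⟨w, ψ⟩ v` on a complex inner product space. -/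
noncomputable def ketbra {H : Type*} [NormedAddCommGroup H] [InnerProductSpace ℂ H]
    (v w : H) : H →L[ℂ] H :=
  (ContinuousLinearMap.toSpanSingleton ℂ v).comp (innerSL ℂ w)

lemma ketbra_apply {H : Type*} [NormedAddCommGroup H] [InnerProductSpace ℂ H]
    (v w ψ : H) : ketbra v w ψ = (inner ℂ w ψ : ℂ) • v := rfl

lemma integral_t_mul_exp (c : ℂ) (hc : c ≠ 0) (T : ℝ) :
    ∫ t in (0:ℝ)..T, (t:ℂ) * Complex.exp (c * t) =
      ((T:ℂ)/c - 1/c^2) * Complex.exp (c*T) + 1/c^2 := by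
  have h : ∀ t : ℝ, HasDerivAt (fun s : ℝ => (((s:ℂ))/c - 1/c^2) * Complex.exp (c*s))
      ((t:ℂ) * Complex.exp (c*t)) t := by
    intro t
    have h1 : HasDerivAt (fun s : ℝ => ((s:ℂ)/c - 1/c^2)) c⁻¹ t := by
      have h0 := ((Complex.ofRealCLM.hasDerivAt (x := t)).div_const c).sub_const ((1:ℂ)/c^2)
      simp only [Complex.ofRealCLM_apply, Complex.ofReal_one, map_one, one_div] at h0 ⊢
      exact h0
    have h2 : HasDerivAt (fun s : ℝ => Complex.exp (c*(s:ℝ))) (c * Complex.exp (c*t)) t := by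
      have h3 : HasDerivAt (fun s : ℝ => c * (s:ℂ)) c t := by
        simpa using (Complex.ofRealCLM.hasDerivAt (x := t)).const_mul c
      simpa [mul_comm] using h3.cexp
    have h4 : HasDerivAt (fun s : ℝ => (((s:ℂ))/c - 1/c^2) * Complex.exp (c*s)) _ t := h1.mul h2
    convert h4 using 1
    field_simp
    ring
  rw [intervalIntegral.integral_eq_sub_of_hasDerivAt (fun t _ => h t) ?_]
  · push_cast
    simp only [Complex.ofReal_zero, zero_div, zero_sub, mul_zero, Complex.exp_zero, mul_one]
    ring
  · apply Continuous.intervalIntegrable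
    exact (Complex.continuous_ofReal).mul (Complex.continuous_exp.comp
      (continuous_const.mul Complex.continuous_ofReal))

lemma integral_t_mul_exp_of_period (ω T : ℝ) (hω : ω ≠ 0)
    (h1 : Complex.exp (Complex.I * ω * T) = 1) :
    ∫ t in (0:ℝ)..T, (t:ℂ) * Complex.exp (Complex.I * ω * t) = (T:ℂ) / (Complex.I * ω) := by
  have hc : (Complex.I * (ω:ℂ)) ≠ 0 :=
    mul_ne_zero Complex.I_ne_zero (Complex.ofReal_ne_zero.mpr hω)
  have h2 := integral_t_mul_exp (Complex.I * ω) hc T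
  simp only [mul_assoc] at h2 h1 ⊢
  rw [h2, h1]
  ring


/-- **Heisenberg pair on the subspace `D = {ψ : ⟨t_max|ψ⟩ = 0}`.**  For the
finite-dimensional discrete-spectrum clock with Hamiltonian `HC = Σ_j ε_j |b j⟩⟨b j|`,
covariant clock states `|t⟩ = Σ_j e^{i g j} e^{-i ε_j t} b j`, and first-moment time operator
`T = (1/t_max) ∫₀^{t_max} t |t⟩⟨t| dt`, for every ψ orthogonal to the clock state `|t_max⟩`
one has `[T, HC] ψ = i ψ`. -/
theorem heisenberg_pair_on_subspace
    {H : Type*} [NormedAddCommGroup H] [InnerProductSpace ℂ H] [FiniteDimensional ℂ H]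
    (n : ℕ) (hn : 1 ≤ n) (b : OrthonormalBasis (Fin n) ℂ H)
    (tmax φ : ℝ) (htmax : 0 < tmax)
    (nj : Fin n → ℤ) (hnj : Function.Injective nj)
    (g : Fin n → ℝ)
    (ε : Fin n → ℝ) (hε : ∀ j, ε j = (2 * Real.pi * (nj j : ℝ) + φ) / tmax)
    (ct : ℝ → H)
    (hct : ∀ t : ℝ, ct t = ∑ j : Fin n,
      (Complex.exp (Complex.I * (g j : ℝ)) * Complex.exp (-Complex.I * (ε j : ℝ) * t)) • b j)
    (HC : H →L[ℂ] H) (hHC : HC = ∑ j : Fin n, ((ε j : ℝ) : ℂ) • ketbra (b j) (b j))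
    (T : H →L[ℂ] H)
    (hT : T = (1 / tmax) • ∫ t in (0:ℝ)..tmax, t • ketbra (ct t) (ct t)) :
    ∀ ψ : H, (inner ℂ (ct tmax) ψ : ℂ) = 0 →
      (T.comp HC - HC.comp T) ψ = Complex.I • ψ := by
  classical
  intro ψ hψ
  have htm0 : (tmax:ℝ) ≠ 0 := ne_of_gt htmax
  set f : Fin n → ℝ → ℂ := fun j t =>
    Complex.exp (Complex.I * (g j : ℝ)) * Complex.exp (-Complex.I * (ε j : ℝ) * t) with hf
  set ψc : Fin n → ℂ := fun k => (inner ℂ (b k) ψ : ℂ) with hψc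
  have hrs : ∀ (r : ℝ) (y : H), r • y = ((r:ℂ)) • y := fun r y => by
    rw [← smul_one_smul ℂ r y, Complex.real_smul, mul_one]
  have hbo : ∀ i j : Fin n, (inner ℂ (b i) (b j) : ℂ) = if i = j then 1 else 0 :=
    orthonormal_iff_ite.mp b.orthonormal
  -- continuity
  have hcont : ∀ j k : Fin n, Continuous (fun t : ℝ => (t:ℂ) * (f j t * (starRingEnd ℂ) (f k t))) := by
    intro j k
    apply Complex.continuous_ofReal.mul
    apply Continuous.mul
    · exact continuous_const.mul (Complex.continuous_exp.comp (by continuity))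
    · exact Complex.continuous_conj.comp
        (continuous_const.mul (Complex.continuous_exp.comp (by continuity)))
  set A : Fin n → Fin n → ℂ :=
    fun j k => ∫ t in (0:ℝ)..tmax, (t:ℂ) * (f j t * (starRingEnd ℂ) (f k t)) with hA
  -- pointwise expansion of the integrand
  have hpt : ∀ t : ℝ, t • ketbra (ct t) (ct t)
      = ∑ j : Fin n, ∑ k : Fin n,
          ((t:ℂ) * (f j t * (starRingEnd ℂ) (f k t))) • ketbra (b j) (b k) := by
    intro t
    ext x
    simp only [ContinuousLinearMap.smul_apply, ContinuousLinearMap.sum_apply, ketbra_apply, hct]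
    rw [sum_inner, Finset.sum_smul]
    simp only [Finset.smul_sum]
    rw [Finset.sum_comm]
    refine Finset.sum_congr rfl fun j _ => ?_
    refine Finset.sum_congr rfl fun k _ => ?_
    simp only [inner_smul_left, smul_smul]
    rw [hrs, smul_smul]
    exact congrArg (fun z : ℂ => z • b j) (by ring)
  -- T as a finite sum of rank-one operators
  have hTs : T = (1 / tmax) • ∑ j : Fin n, ∑ k : Fin n, A j k • ketbra (b j) (b k) := by
    rw [hT]
    congr 1
    rw [intervalIntegral.integral_congr (fun t _ => hpt t)]
    rw [intervalIntegral.integral_finset_sum]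
    · refine Finset.sum_congr rfl fun j _ => ?_
      rw [intervalIntegral.integral_finset_sum]
      · exact Finset.sum_congr rfl fun k _ => intervalIntegral.integral_smul_const _ _
      · intro k _
        exact (((hcont j k).smul continuous_const)).intervalIntegrable _ _
    · intro j _
      exact (continuous_finset_sum _ fun k _ =>
        (hcont j k).smul continuous_const).intervalIntegrable _ _
  -- the exponent periodicity facts
  have hreal : ∀ j k : Fin n, (ε k - ε j) * tmax = 2*Real.pi*((nj k:ℝ) - (nj j:ℝ)) := by
    intro j k
    rw [hε, hε]
    field_simp
    ring
  have homega : ∀ j k : Fin n, j ≠ k → (ε k - ε j : ℝ) ≠ 0 := by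
    intro j k hjk hcon
    have h1 := hreal j k
    rw [hcon, zero_mul] at h1
    have hne : (nj k : ℝ) ≠ (nj j : ℝ) := by
      intro h
      exact hjk (hnj (by exact_mod_cast h)).symm
    have h4 : ((nj k:ℝ) - (nj j:ℝ)) = 0 := by
      rcases mul_eq_zero.mp h1.symm with h | h
      · exact absurd h (by positivity)
      · exact h
    exact hne (by linarith)
  have hper : ∀ j k : Fin n, Complex.exp (Complex.I * ((ε k - ε j : ℝ) : ℂ) * (tmax:ℂ)) = 1 := by
    intro j k
    have hval : (Complex.I * ((ε k - ε j : ℝ) : ℂ) * (tmax:ℂ))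
        = ((nj k - nj j : ℤ) : ℂ) * (2 * (Real.pi : ℂ) * Complex.I) := by
      have h5 : (((ε k - ε j) * tmax : ℝ) : ℂ)
          = ((2*Real.pi*((nj k:ℝ) - (nj j:ℝ)) : ℝ) : ℂ) := by rw [hreal j k]
      push_cast at h5 ⊢
      linear_combination Complex.I * h5
    rw [hval, Complex.exp_int_mul_two_pi_mul_I]
  -- value of A j k * (ε k - ε j) for j ≠ k
  have hAval : ∀ j k : Fin n, j ≠ k →
      A j k * (((ε k : ℝ):ℂ) - ((ε j : ℝ):ℂ))
        = -Complex.I * tmax * (Complex.exp (Complex.I * (g j : ℝ)) *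
            Complex.exp (-Complex.I * (g k : ℝ))) := by
    intro j k hjk
    have hfc : ∀ t : ℝ, (t:ℂ) * (f j t * (starRingEnd ℂ) (f k t))
        = (Complex.exp (Complex.I * (g j : ℝ)) * Complex.exp (-Complex.I * (g k : ℝ))) *
          ((t:ℂ) * Complex.exp (Complex.I * ((ε k - ε j : ℝ):ℂ) * (t:ℂ))) := by
      intro t
      have he : Complex.exp (Complex.I * ((ε k - ε j : ℝ):ℂ) * (t:ℂ))
          = Complex.exp (Complex.I * (ε k:ℝ) * t) * Complex.exp (-Complex.I * (ε j:ℝ) * t) := by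
        rw [← Complex.exp_add]; congr 1; push_cast; ring
      rw [hf, he]
      simp only [map_mul, ← Complex.exp_conj, Complex.conj_I, Complex.conj_ofReal, map_neg,
        neg_mul, neg_neg, map_ofNat]
      ring
    have hAv : A j k = (Complex.exp (Complex.I * (g j : ℝ)) * Complex.exp (-Complex.I * (g k : ℝ))) *
        ((tmax:ℂ) / (Complex.I * ((ε k - ε j : ℝ):ℂ))) := by
      rw [show A j k = ∫ t in (0:ℝ)..tmax, (t:ℂ) * (f j t * (starRingEnd ℂ) (f k t)) from rfl]
      rw [intervalIntegral.integral_congr (fun t _ => hfc t)]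
      rw [intervalIntegral.integral_const_mul]
      rw [integral_t_mul_exp_of_period (ε k - ε j) tmax (homega j k hjk) (hper j k)]
    rw [hAv]
    have hω : (((ε k - ε j : ℝ)):ℂ) ≠ 0 := by
      exact_mod_cast Complex.ofReal_ne_zero.mpr (homega j k hjk)
    have hωeq : (((ε k : ℝ):ℂ) - ((ε j : ℝ):ℂ)) = (((ε k - ε j : ℝ)):ℂ) := by push_cast; ring
    rw [hωeq]
    have hIω : (tmax:ℂ) / (Complex.I * ((ε k - ε j : ℝ):ℂ)) * ((ε k - ε j : ℝ):ℂ)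
        = -Complex.I * tmax := by
      rw [div_mul_eq_mul_div, mul_comm Complex.I _, ← div_div, mul_div_assoc, div_self hω,
        mul_one, div_eq_mul_inv, Complex.inv_I]
      ring
    rw [mul_assoc, hIω]
    ring
  -- orthogonality in coefficient form
  have hinner : (inner ℂ (ct tmax) ψ : ℂ) = Complex.exp (Complex.I * (φ:ℝ)) *
      ∑ k : Fin n, Complex.exp (-Complex.I * (g k:ℝ)) * ψc k := by
    rw [hct, sum_inner, Finset.mul_sum]
    refine Finset.sum_congr rfl fun k _ => ?_
    rw [inner_smul_left]
    have hεt : Complex.I * ((ε k:ℝ):ℂ) * (tmax:ℂ)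
        = ((nj k : ℤ):ℂ) * (2*(Real.pi:ℂ)*Complex.I) + Complex.I * (φ:ℝ) := by
      have h5 : ((ε k * tmax : ℝ):ℂ) = ((2*Real.pi*(nj k:ℝ) + φ : ℝ):ℂ) := by
        rw [hε]; field_simp
      push_cast at h5 ⊢
      linear_combination Complex.I * h5
    simp only [map_mul, ← Complex.exp_conj, Complex.conj_I, Complex.conj_ofReal, map_neg,
      neg_mul, neg_neg]
    rw [hεt, Complex.exp_add, Complex.exp_int_mul_two_pi_mul_I, one_mul]
    ring
  have hE : ∑ k : Fin n, Complex.exp (-Complex.I * (g k:ℝ)) * ψc k = 0 := by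
    have h6 : Complex.exp (Complex.I * (φ:ℝ)) *
        ∑ k : Fin n, Complex.exp (-Complex.I * (g k:ℝ)) * ψc k = 0 := by
      rw [← hinner]; exact hψ
    rcases mul_eq_zero.mp h6 with h | h
    · exact absurd h (Complex.exp_ne_zero _)
    · exact h
  -- inner products with HC
  have hHCinner : ∀ (x : H) (k : Fin n),
      (inner ℂ (b k) (HC x) : ℂ) = ((ε k:ℝ):ℂ) * (inner ℂ (b k) x : ℂ) := by
    intro x k
    rw [hHC]
    simp only [ContinuousLinearMap.sum_apply, ContinuousLinearMap.smul_apply, ketbra_apply,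
      inner_sum, inner_smul_right, hbo, mul_ite, mul_one, mul_zero, ite_mul, zero_mul]
    simp [Finset.sum_ite_eq', mul_comm]
  -- key scalar identity
  have hkey : ∀ j : Fin n,
      ∑ k : Fin n, A j k * (((ε k:ℝ):ℂ) - ((ε j:ℝ):ℂ)) * ψc k
        = Complex.I * tmax * ψc j := by
    intro j
    have hterm : ∀ k : Fin n, A j k * (((ε k:ℝ):ℂ) - ((ε j:ℝ):ℂ)) * ψc k
        = (-Complex.I * tmax * Complex.exp (Complex.I * (g j:ℝ))) *
            (Complex.exp (-Complex.I * (g k:ℝ)) * ψc k)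
          - (if k = j then (-Complex.I * tmax * Complex.exp (Complex.I * (g j:ℝ))) *
              (Complex.exp (-Complex.I * (g k:ℝ)) * ψc k) else 0) := by
      intro k
      by_cases hkj : k = j
      · subst hkj
        rw [if_pos rfl]
        ring
      · have h7 := hAval j k (fun h => hkj h.symm)
        rw [if_neg hkj, sub_zero,
          show A j k * (((ε k:ℝ):ℂ) - ((ε j:ℝ):ℂ)) * ψc k
            = (A j k * (((ε k:ℝ):ℂ) - ((ε j:ℝ):ℂ))) * ψc k from by ring, h7]
        ring
    rw [Finset.sum_congr rfl (fun k _ => hterm k), Finset.sum_sub_distrib, ← Finset.mul_sum,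
      hE, mul_zero, zero_sub, Finset.sum_ite_eq' Finset.univ j _]
    simp only [Finset.mem_univ, if_true]
    have h8 : Complex.exp (Complex.I * (g j:ℝ)) * Complex.exp (-Complex.I * (g j:ℝ)) = 1 := by
      rw [← Complex.exp_add]
      ring_nf
      exact Complex.exp_zero
    linear_combination Complex.I * (tmax:ℂ) * ψc j * h8
  -- T applied to a vector
  have hTx : ∀ x : H, T x = ((1/tmax : ℝ):ℂ) •
      ∑ j : Fin n, ∑ k : Fin n, (A j k * (inner ℂ (b k) x : ℂ)) • b j := by
    intro x
    rw [hTs]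
    simp only [ContinuousLinearMap.smul_apply, ContinuousLinearMap.sum_apply,
      ContinuousLinearMap.coe_smul', Pi.smul_apply, ketbra_apply]
    rw [hrs]
    congr 1
    refine Finset.sum_congr rfl fun j _ => Finset.sum_congr rfl fun k _ => ?_
    rw [smul_smul]
  -- assemble
  simp only [ContinuousLinearMap.sub_apply, ContinuousLinearMap.comp_apply]
  rw [hTx (HC ψ), hTx ψ, _root_.map_smul, _root_.map_sum]
  simp only [_root_.map_sum, _root_.map_smul, hHCinner]
  have hHCb : ∀ j : Fin n, HC (b j) = ((ε j:ℝ):ℂ) • b j := by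
    intro j
    rw [hHC]
    simp only [ContinuousLinearMap.sum_apply, ContinuousLinearMap.smul_apply, ketbra_apply, hbo]
    simp [Finset.sum_ite_eq']
  simp only [hHCb, smul_smul]
  rw [← smul_sub, ← Finset.sum_sub_distrib]
  have hsum : ∀ j : Fin n,
      ((∑ k : Fin n, (A j k * (((ε k:ℝ):ℂ) * (inner ℂ (b k) ψ : ℂ))) • b j)
        - ∑ k : Fin n, ((A j k * (inner ℂ (b k) ψ : ℂ)) * ((ε j:ℝ):ℂ)) • b j)
      = (Complex.I * tmax * ψc j) • b j := by
    intro j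
    rw [← Finset.sum_sub_distrib, ← hkey j, Finset.sum_smul]
    refine Finset.sum_congr rfl fun k _ => ?_
    rw [← sub_smul]
    exact congrArg (fun z : ℂ => z • b j) (by rw [hψc]; ring)
  rw [Finset.sum_congr rfl (fun j _ => hsum j)]
  have hcoef : ∀ j : Fin n, ((1/tmax : ℝ):ℂ) • ((Complex.I * tmax * ψc j) • b j)
      = Complex.I • (ψc j • b j) := by
    intro j
    rw [smul_smul, smul_smul]
    congr 1
    have h9 : ((tmax:ℝ):ℂ) ≠ 0 := Complex.ofReal_ne_zero.mpr htm0
    field_simp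
    simp [h9]
  rw [Finset.smul_sum, Finset.sum_congr rfl (fun j _ => hcoef j), ← Finset.smul_sum]
  congr 1
  simpa [hψc] using b.sum_repr' ψ


end
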